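/- Every weakly graphic homogeneous relation is weakly digraphic. -/
import Mathlib


/-- `H` is a homogeneous relation: for each `x`, the binary relation
`H x · ·` is an equivalence relation on the elements distinct from `x`. -/
def IsHomRel {X : Type*} (H : X → X → X → Prop) : Prop :=
  (∀ x y, y ≠ x → H x y y) ∧
  (∀ x y z, y ≠ x → z ≠ x → H x y z → H x z y) ∧
  (∀ x y z w, y ≠ x → z ≠ x → w ≠ x → H x y z → H x z w → H x y w)

/-- `M` is a homogeneous module of `H`. -/
def IsModule {X : Type*} (H : X → X → X → Prop) (M : Set X) : Prop :=
  ∀ m ∈ M, ∀ m' ∈ M, ∀ x ∉ M, H x m m'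

/-- Two sets overlap. -/
def Overlap {X : Type*} (A B : Set X) : Prop :=
  (A ∩ B).Nonempty ∧ (A \ B).Nonempty ∧ (B \ A).Nonempty

def WeaklyGraphic {X : Type*} (H : X → X → X → Prop) : Prop :=
  ∀ x y z : X, x ≠ y → x ≠ z → y ≠ z → H y x z → H z x y → H x y z

def WeaklyDigraphic {X : Type*} (H : X → X → X → Prop) : Prop :=
  ∀ x y s t : X, x ≠ y → x ≠ s → x ≠ t → y ≠ s → y ≠ t → s ≠ t →
    H s x y → H t x y → H y s x → H y t x → H x s t

theorem stmt_9 {X : Type*} [Fintype X] (H : X → X → X → Prop)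
    (hH : IsHomRel H) (hwg : WeaklyGraphic H) : WeaklyDigraphic H := by
  obtain ⟨hrefl, hsym, htrans⟩ := hH
  intro x y s t hxy hxs hxt hys hyt hst h1 h2 h3 h4
  have hxsy : H x s y := hwg x s y hxs hxy hys.symm (h1) (hsym y s x hys.symm hxy h3)
  have hxty : H x t y := hwg x t y hxt hxy hyt.symm (h2) (hsym y t x hyt.symm hxy h4)
  exact htrans x s y t hxs.symm hxy.symm hxt.symm hxsy (hsym x t y hxt.symm hxy.symm hxty)
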